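/- Let n ≥ 2 and let k be a nonzero integer. Then the image φ_k(B_n) of Wada's representation of type (1) with parameter k and the image χ(B_n) of Wada's representation of type (3) are different subgroups of Aut(F_n). -/

import Mathlib

/-- The defining relations of the braid group on `m + 1` strands (`m` generators
`σ_1, …, σ_m`, indexed here by `Fin m`): the commutation relations
`σ_i σ_j = σ_j σ_i` for `|i - j| > 1` and the braid relations
`σ_i σ_{i+1} σ_i = σ_{i+1} σ_i σ_{i+1}`. -/
def braidRels (m : ℕ) : Set (FreeGroup (Fin m)) :=
  {r | (∃ i j : Fin m, (i : ℕ) + 1 < (j : ℕ) ∧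
        r = FreeGroup.of i * FreeGroup.of j * (FreeGroup.of i)⁻¹ * (FreeGroup.of j)⁻¹) ∨
       (∃ i j : Fin m, (i : ℕ) + 1 = (j : ℕ) ∧
        r = FreeGroup.of i * FreeGroup.of j * FreeGroup.of i *
            (FreeGroup.of j * FreeGroup.of i * FreeGroup.of j)⁻¹)}

/-- The index in `Fin n` of the generator `x_i` of `F_n` acted on by `σ_i`
(the strand index `i`, `0`-based). -/
def xL (n : ℕ) (i : Fin (n - 1)) : Fin n := ⟨i, by have := i.isLt; omega⟩

/-- The index in `Fin n` of the generator `x_{i+1}` of `F_n` acted on by `σ_i`. -/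
def xR (n : ℕ) (i : Fin (n - 1)) : Fin n := ⟨(i : ℕ) + 1, by have := i.isLt; omega⟩
/-- For `n ≥ 2` and a nonzero integer `k`, the image of Wada's type (1)
representation `φ_k` and the image of Wada's type (3) representation `χ` of `B_n`
are different subgroups of `Aut(F_n)`. -/
theorem wada_type1_type3_images_distinct (n : ℕ) (hn : 2 ≤ n) (k : ℤ) (hk : k ≠ 0)
    (φ χ : PresentedGroup (braidRels (n - 1)) →* MulAut (FreeGroup (Fin n)))
    (hφ : ∀ i : Fin (n - 1),
      (φ (PresentedGroup.of i)) (FreeGroup.of (xL n i)) =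
          FreeGroup.of (xL n i) ^ k * FreeGroup.of (xR n i) * FreeGroup.of (xL n i) ^ (-k) ∧
      (φ (PresentedGroup.of i)) (FreeGroup.of (xR n i)) = FreeGroup.of (xL n i) ∧
      ∀ j : Fin n, j ≠ xL n i → j ≠ xR n i →
        (φ (PresentedGroup.of i)) (FreeGroup.of j) = FreeGroup.of j)
    (hχ : ∀ i : Fin (n - 1),
      (χ (PresentedGroup.of i)) (FreeGroup.of (xL n i)) =
          FreeGroup.of (xL n i) ^ 2 * FreeGroup.of (xR n i) ∧
      (χ (PresentedGroup.of i)) (FreeGroup.of (xR n i)) =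
          (FreeGroup.of (xR n i))⁻¹ * (FreeGroup.of (xL n i))⁻¹ * FreeGroup.of (xR n i) ∧
      ∀ j : Fin n, j ≠ xL n i → j ≠ xR n i →
        (χ (PresentedGroup.of i)) (FreeGroup.of j) = FreeGroup.of j) :
    φ.range ≠ χ.range := by
  -- total exponent sum homomorphism
  set s : FreeGroup (Fin n) →* Multiplicative ℤ :=
    FreeGroup.lift (fun _ => Multiplicative.ofAdd (1 : ℤ)) with hs
  have hsof : ∀ j : Fin n, s (FreeGroup.of j) = Multiplicative.ofAdd (1 : ℤ) := by
    intro j; simp [hs]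
  -- every element of φ.range preserves s
  have key : ∀ x : PresentedGroup (braidRels (n - 1)), ∀ g, s ((φ x) g) = s g := by
    intro x
    have hx : x ∈ Subgroup.closure (Set.range (PresentedGroup.of (rels := braidRels (n - 1)))) := by
      rw [PresentedGroup.closure_range_of]; trivial
    induction hx using Subgroup.closure_induction with
    | mem x hxm =>
      obtain ⟨i, rfl⟩ := hxm
      obtain ⟨h1, h2, h3⟩ := hφ i
      intro g
      induction g using FreeGroup.induction_on with
      | C1 => simp
      | of j =>
        show s ((φ (PresentedGroup.of i)) (FreeGroup.of j)) = s (FreeGroup.of j)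
        by_cases hjl : j = xL n i
        · subst hjl
          rw [h1]
          simp [hsof]
        · by_cases hjr : j = xR n i
          · subst hjr; rw [h2, hsof, hsof]
          · rw [h3 j hjl hjr]
      | inv_of j hj =>
        show s ((φ (PresentedGroup.of i)) (FreeGroup.of j)⁻¹) = s (FreeGroup.of j)⁻¹
        rw [map_inv, map_inv, map_inv]
        exact congrArg Inv.inv hj
      | mul a b ha hb =>
        rw [map_mul, map_mul, map_mul, ha, hb]
    | one => intro g; simp
    | mul a b _ _ ha hb =>
      intro g; rw [map_mul]; simp only [MulAut.mul_apply]; rw [ha, hb]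
    | inv a _ ha =>
      intro g
      calc s ((φ a⁻¹) g) = s ((φ a) ((φ a⁻¹) g)) := (ha _).symm
        _ = s g := by rw [map_inv]; simp
  -- an element of χ.range not preserving s
  intro hEq
  set i0 : Fin (n - 1) := ⟨0, by omega⟩ with hi0
  have hmem : χ (PresentedGroup.of i0) ∈ φ.range := by
    rw [hEq]; exact ⟨PresentedGroup.of i0, rfl⟩
  obtain ⟨x, hx⟩ := hmem
  have hpres := key x (FreeGroup.of (xL n i0))
  rw [hx] at hpres
  obtain ⟨h1, -, -⟩ := hχ i0
  rw [h1] at hpres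
  rw [map_mul, map_pow, hsof, hsof] at hpres
  rw [pow_two, ← ofAdd_add, ← ofAdd_add] at hpres
  exact absurd (Multiplicative.ofAdd.injective hpres) (by omega)
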